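/- arXiv:2404.10191 — 2 statements merged into one kernel-verified Lean document; each statement's English description precedes it below -/
import Mathlib

section
/- Let P be a symmetric positive definite n×n real matrix, R a symmetric positive definite m×m real matrix, H an m×n real matrix, and K* = P·Hᵀ·(H·P·Hᵀ + R)⁻¹ the Kalman gain. Then for every index i, the Fréchet derivative of the real-valued map K ↦ a_i^K (the i-th coefficient of the characteristic polynomial of P_K) at the point K* is the zero linear map; i.e., K* is a critical point of each coefficient of the characteristic polynomial. -/
open Matrix

/-- The posterior covariance matrix `P_K = (I - K·H)·P·(I - K·H)ᵀ + K·R·Kᵀ`. -/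
noncomputable def postCov {n m : ℕ} (P : Matrix (Fin n) (Fin n) ℝ)
    (R : Matrix (Fin m) (Fin m) ℝ) (H : Matrix (Fin m) (Fin n) ℝ)
    (K : Matrix (Fin n) (Fin m) ℝ) : Matrix (Fin n) (Fin n) ℝ :=
  (1 - K * H) * P * (1 - K * H)ᵀ + K * R * Kᵀ

/-- The Kalman gain `K* = P·Hᵀ·(H·P·Hᵀ + R)⁻¹`. -/
noncomputable def kalmanGain {n m : ℕ} (P : Matrix (Fin n) (Fin n) ℝ)
    (R : Matrix (Fin m) (Fin m) ℝ) (H : Matrix (Fin m) (Fin n) ℝ) :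
    Matrix (Fin n) (Fin m) ℝ :=
  P * Hᵀ * (H * P * Hᵀ + R)⁻¹

attribute [local instance] Matrix.normedAddCommGroup Matrix.normedSpace

/-- Key algebraic identity: `P_K = (K - K*)·S·(K - K*)ᵀ + P_{K*}` where `S = H·P·Hᵀ + R`. -/
theorem postCov_eq_quad_add {n m : ℕ} (P : Matrix (Fin n) (Fin n) ℝ)
    (R : Matrix (Fin m) (Fin m) ℝ) (H : Matrix (Fin m) (Fin n) ℝ)
    (hP : P.PosDef) (hR : R.PosDef) (K : Matrix (Fin n) (Fin m) ℝ) :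
    postCov P R H K =
      (K - kalmanGain P R H) * (H * P * Hᵀ + R) * (K - kalmanGain P R H)ᵀ
        + postCov P R H (kalmanGain P R H) := by
  have hPt : Pᵀ = P := by
    have := hP.isHermitian.eq
    simpa [conjTranspose_eq_transpose_of_trivial] using this
  have hHPH : (H * P * Hᵀ).PosSemidef := by
    have := hP.posSemidef.mul_mul_conjTranspose_same H
    simpa [conjTranspose_eq_transpose_of_trivial, hPt] using this
  have hS : (H * P * Hᵀ + R).PosDef := Matrix.PosDef.posSemidef_add hHPH hR
  set S := H * P * Hᵀ + R with hSdef
  have hSt : Sᵀ = S := by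
    have := hS.isHermitian.eq
    simpa [conjTranspose_eq_transpose_of_trivial] using this
  have hdet : IsUnit S.det := isUnit_iff_isUnit_det _ |>.1 hS.isUnit
  set K₀ := kalmanGain P R H with hK0
  have h1 : K₀ * S = P * Hᵀ := by
    rw [hK0, kalmanGain, ← hSdef, Matrix.nonsing_inv_mul_cancel_right _ _ hdet]
  have h2 : K₀ᵀ = S⁻¹ * (H * P) := by
    rw [hK0, kalmanGain, ← hSdef, transpose_mul, transpose_mul, transpose_nonsing_inv, hSt,
      transpose_transpose, hPt]
  have h3 : S * K₀ᵀ = H * P := by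
    rw [h2, Matrix.mul_nonsing_inv_cancel_left _ _ hdet]
  have expand : ∀ K : Matrix (Fin n) (Fin m) ℝ,
      postCov P R H K = P - K * (H * P) - P * Hᵀ * Kᵀ + K * S * Kᵀ := by
    intro K
    simp only [postCov, hSdef, transpose_sub, transpose_one, transpose_mul, hPt,
      Matrix.sub_mul, Matrix.mul_sub, Matrix.mul_one, Matrix.one_mul, Matrix.mul_add,
      Matrix.add_mul, Matrix.mul_assoc]
    abel
  rw [expand, expand]
  have h4 : P * Hᵀ * K₀ᵀ = K₀ * (H * P) := by
    rw [← h1, Matrix.mul_assoc, h3]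
  simp only [transpose_sub, Matrix.sub_mul, Matrix.mul_sub]
  rw [h1, Matrix.mul_assoc K S K₀ᵀ, h3, h4]
  abel

/-- Charpoly coefficients as evaluations of the universal characteristic polynomial. -/
theorem charpoly_coeff_eq_aeval {n : ℕ} (M : Matrix (Fin n) (Fin n) ℝ) (i : ℕ) :
    M.charpoly.coeff i =
      MvPolynomial.aeval (fun q : Fin n × Fin n => M q.1 q.2)
        ((Matrix.charpoly.univ ℝ (Fin n)).coeff i) := by
  have h := Matrix.charpoly.univ_coeff_eval₂Hom (Fin n) (RingHom.id ℝ)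
    (fun q : Fin n × Fin n => M q.1 q.2) i
  have hM : Matrix.of (Function.curry (fun q : Fin n × Fin n => M q.1 q.2)) = M := by
    ext a b; rfl
  rw [hM] at h
  rw [← h, MvPolynomial.aeval_def, Algebra.algebraMap_self]
  rfl

/-- The matrix entry map as a continuous linear map. -/
noncomputable def entryCLM {n : ℕ} (q : Fin n × Fin n) :
    Matrix (Fin n) (Fin n) ℝ →L[ℝ] ℝ :=
  LinearMap.toContinuousLinearMap
    ((LinearMap.proj (R := ℝ) (φ := fun _ : Fin n => ℝ) q.2).comp (LinearMap.proj (φ := fun _ : Fin n => Fin n → ℝ) q.1))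

theorem differentiableAt_charpoly_coeff_fun {n : ℕ} (i : ℕ) (M : Matrix (Fin n) (Fin n) ℝ) :
    DifferentiableAt ℝ (fun M : Matrix (Fin n) (Fin n) ℝ =>
      MvPolynomial.aeval (fun q : Fin n × Fin n => M q.1 q.2)
        ((Matrix.charpoly.univ ℝ (Fin n)).coeff i)) M := by
  refine (AnalyticAt.aeval_mvPolynomial (fun q => ?_) _).differentiableAt
  exact (entryCLM q).analyticAt M

/-- The quadratic form `(A, C) ↦ A·S·Cᵀ` as a bilinear map. -/
noncomputable def quadBil {n m : ℕ} (S : Matrix (Fin m) (Fin m) ℝ) :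
    Matrix (Fin n) (Fin m) ℝ →ₗ[ℝ] Matrix (Fin n) (Fin m) ℝ →ₗ[ℝ] Matrix (Fin n) (Fin n) ℝ :=
  LinearMap.mk₂ ℝ (fun A C => A * S * Cᵀ)
    (fun A A' C => by simp [Matrix.add_mul])
    (fun r A C => by simp [Matrix.smul_mul])
    (fun A C C' => by simp [Matrix.mul_add, transpose_add])
    (fun r A C => by simp [Matrix.mul_smul, transpose_smul])

/-- The quadratic form `(A, C) ↦ A·S·Cᵀ` as a continuous bilinear map. -/
noncomputable def quadCLM {n m : ℕ} (S : Matrix (Fin m) (Fin m) ℝ) :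
    Matrix (Fin n) (Fin m) ℝ →L[ℝ] Matrix (Fin n) (Fin m) ℝ →L[ℝ] Matrix (Fin n) (Fin n) ℝ :=
  LinearMap.toContinuousLinearMap
    ((LinearMap.toContinuousLinearMap :
        (Matrix (Fin n) (Fin m) ℝ →ₗ[ℝ] Matrix (Fin n) (Fin n) ℝ) ≃ₗ[ℝ] _).toLinearMap.comp
      (quadBil S))

theorem quadCLM_apply {n m : ℕ} (S : Matrix (Fin m) (Fin m) ℝ)
    (A C : Matrix (Fin n) (Fin m) ℝ) : quadCLM S A C = A * S * Cᵀ := rfl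

theorem hasFDerivAt_quad {n m : ℕ} (S : Matrix (Fin m) (Fin m) ℝ)
    (K₀ : Matrix (Fin n) (Fin m) ℝ) (C : Matrix (Fin n) (Fin n) ℝ) :
    HasFDerivAt (fun K : Matrix (Fin n) (Fin m) ℝ => (K - K₀) * S * (K - K₀)ᵀ + C)
      (0 : Matrix (Fin n) (Fin m) ℝ →L[ℝ] Matrix (Fin n) (Fin n) ℝ) K₀ := by
  have hB : IsBoundedBilinearMap ℝ
      (fun p : Matrix (Fin n) (Fin m) ℝ × Matrix (Fin n) (Fin m) ℝ => quadCLM S p.1 p.2) :=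
    (quadCLM S).isBoundedBilinearMap
  have hg : HasFDerivAt (fun K : Matrix (Fin n) (Fin m) ℝ => (K - K₀, K - K₀))
      ((ContinuousLinearMap.id ℝ _).prod (ContinuousLinearMap.id ℝ _)) K₀ :=
    HasFDerivAt.prodMk ((hasFDerivAt_id K₀).sub_const K₀) ((hasFDerivAt_id K₀).sub_const K₀)
  have h0 : HasFDerivAt
      (fun p : Matrix (Fin n) (Fin m) ℝ × Matrix (Fin n) (Fin m) ℝ => quadCLM S p.1 p.2)
      (hB.deriv (K₀ - K₀, K₀ - K₀)) (K₀ - K₀, K₀ - K₀) := hB.hasFDerivAt _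
  have hcomp := h0.comp K₀ hg
  have hzero : (hB.deriv (K₀ - K₀, K₀ - K₀)).comp
      ((ContinuousLinearMap.id ℝ (Matrix (Fin n) (Fin m) ℝ)).prod (ContinuousLinearMap.id ℝ _))
      = 0 := by
    ext x
    change (quadCLM S (K₀ - K₀) x + quadCLM S x (K₀ - K₀)) _ _ = _
    simp [hB.deriv_apply, quadCLM_apply, Matrix.zero_mul, Matrix.mul_zero]
  have := hcomp.add_const C
  erw [hzero] at this
  exact this

theorem fderiv_charpoly_coeff_postCov_kalmanGain {n m : ℕ} (P : Matrix (Fin n) (Fin n) ℝ)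
    (R : Matrix (Fin m) (Fin m) ℝ) (H : Matrix (Fin m) (Fin n) ℝ)
    (hP : P.PosDef) (hR : R.PosDef) (i : ℕ) :
    fderiv ℝ (fun K : Matrix (Fin n) (Fin m) ℝ => (postCov P R H K).charpoly.coeff i)
      (kalmanGain P R H) = 0 := by
  set K₀ := kalmanGain P R H with hK0
  set φ : Matrix (Fin n) (Fin n) ℝ → ℝ := fun M =>
    MvPolynomial.aeval (fun q : Fin n × Fin n => M q.1 q.2)
      ((Matrix.charpoly.univ ℝ (Fin n)).coeff i) with hφ
  have hfun : postCov P R H = fun K : Matrix (Fin n) (Fin m) ℝ =>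
      (K - K₀) * (H * P * Hᵀ + R) * (K - K₀)ᵀ + postCov P R H K₀ :=
    funext fun K => postCov_eq_quad_add P R H hP hR K
  have hpost : HasFDerivAt (postCov P R H)
      (0 : Matrix (Fin n) (Fin m) ℝ →L[ℝ] Matrix (Fin n) (Fin n) ℝ) K₀ := by
    rw [hfun]
    exact hasFDerivAt_quad _ _ _
  have hcomp : (fun K : Matrix (Fin n) (Fin m) ℝ => (postCov P R H K).charpoly.coeff i)
      = φ ∘ postCov P R H := funext fun K => charpoly_coeff_eq_aeval _ i
  erw [hcomp, fderiv_comp (g := φ) K₀ (differentiableAt_charpoly_coeff_fun i _) hpost.differentiableAt,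
    hpost.fderiv, ContinuousLinearMap.comp_zero]
  rfl
end

section
/- Let P be a symmetric positive definite n×n real matrix, R a symmetric positive definite m×m real matrix, H an m×n real matrix, and K* = P·Hᵀ·(H·P·Hᵀ + R)⁻¹ the Kalman gain. Then for every real λ < 0 and every n×m real matrix K, |det(λ·I - P_{K*})| ≤ |det(λ·I - P_K)|; in particular, taking λ = -1, the sum Σ_{i=0}^{n} |a_i^K| of the absolute values of the coefficients of the characteristic polynomial of P_K (equivalently, the sum of all elementary symmetric polynomials of the eigenvalues of P_K) is minimized at K = K*: Σ_{i=0}^{n} |a_i^{K*}| ≤ Σ_{i=0}^{n} |a_i^K|. -/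
open Matrix

section Aux

open Polynomial

variable {n m : ℕ}

private lemma charpoly_conj_eq (U D V : Matrix (Fin n) (Fin n) ℝ) (h1 : U * V = 1) :
    (U * D * V).charpoly = D.charpoly := by
  have hkey : charmatrix (U * D * V) =
      (C : ℝ →+* ℝ[X]).mapMatrix U * charmatrix D * (C : ℝ →+* ℝ[X]).mapMatrix V := by
    rw [charmatrix, charmatrix, mul_sub, sub_mul]
    congr 1
    · rw [mul_assoc, (scalar_commute (X : ℝ[X]) (fun r' => Commute.all _ _) _).eq, ← mul_assoc,
        ← _root_.map_mul ((C : ℝ →+* ℝ[X]).mapMatrix), h1, _root_.map_one, one_mul]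
    · rw [← _root_.map_mul ((C : ℝ →+* ℝ[X]).mapMatrix),
        ← _root_.map_mul ((C : ℝ →+* ℝ[X]).mapMatrix)]
  rw [Matrix.charpoly, hkey, det_mul, det_mul, mul_right_comm, ← det_mul,
    ← _root_.map_mul ((C : ℝ →+* ℝ[X]).mapMatrix), h1, _root_.map_one, det_one, one_mul,
    Matrix.charpoly]

private lemma charpoly_eq_prod_eigenvalues {M : Matrix (Fin n) (Fin n) ℝ} (hM : M.IsHermitian) :
    M.charpoly = ∏ i, (X - Polynomial.C (hM.eigenvalues i)) := by
  have hspec : M = (hM.eigenvectorUnitary : Matrix (Fin n) (Fin n) ℝ) *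
      diagonal hM.eigenvalues * star (hM.eigenvectorUnitary : Matrix (Fin n) (Fin n) ℝ) := by
    simpa using hM.spectral_theorem
  have h1 : (hM.eigenvectorUnitary : Matrix (Fin n) (Fin n) ℝ) *
      star (hM.eigenvectorUnitary : Matrix (Fin n) (Fin n) ℝ) = 1 :=
    mem_unitaryGroup_iff.mp hM.eigenvectorUnitary.2
  have hdiag : charmatrix (diagonal hM.eigenvalues) =
      diagonal (fun i => (X : ℝ[X]) - Polynomial.C (hM.eigenvalues i)) := by
    ext i j
    by_cases h : i = j
    · subst h; simp
    · simp [h, diagonal_apply_ne _ h]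
  conv_lhs => rw [hspec]
  rw [charpoly_conj_eq _ _ _ h1, Matrix.charpoly, hdiag, det_diagonal]

private lemma det_one_add_eq {M : Matrix (Fin n) (Fin n) ℝ} (hM : M.IsHermitian) :
    (1 + M).det = ∏ i, (1 + hM.eigenvalues i) := by
  have hspec : M = (hM.eigenvectorUnitary : Matrix (Fin n) (Fin n) ℝ) *
      diagonal hM.eigenvalues * star (hM.eigenvectorUnitary : Matrix (Fin n) (Fin n) ℝ) := by
    simpa using hM.spectral_theorem
  have h1 : (hM.eigenvectorUnitary : Matrix (Fin n) (Fin n) ℝ) *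
      star (hM.eigenvectorUnitary : Matrix (Fin n) (Fin n) ℝ) = 1 :=
    mem_unitaryGroup_iff.mp hM.eigenvectorUnitary.2
  have key : 1 + M = (hM.eigenvectorUnitary : Matrix (Fin n) (Fin n) ℝ) *
      diagonal (fun i => 1 + hM.eigenvalues i) *
      star (hM.eigenvectorUnitary : Matrix (Fin n) (Fin n) ℝ) := by
    have hd : (diagonal fun i => 1 + hM.eigenvalues i) =
        1 + diagonal hM.eigenvalues := by
      rw [← diagonal_one, diagonal_add]
    rw [hd, mul_add, add_mul, ← hspec, mul_one, h1]
  rw [key, det_mul, det_mul, mul_right_comm, ← det_mul, h1, det_one, one_mul, det_diagonal]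

private lemma one_le_det_one_add {M : Matrix (Fin n) (Fin n) ℝ} (hM : M.PosSemidef) :
    1 ≤ (1 + M).det := by
  rw [det_one_add_eq hM.isHermitian]
  have h0 : (1:ℝ) = ∏ _i : Fin n, (1:ℝ) := by simp
  rw [h0]
  exact Finset.prod_le_prod (fun i _ => by norm_num)
    (fun i _ => by linarith [hM.eigenvalues_nonneg i])

open scoped MatrixOrder in
private lemma det_mono {A B : Matrix (Fin n) (Fin n) ℝ} (hA : A.PosDef)
    (hBA : (B - A).PosSemidef) : A.det ≤ B.det := by
  set S := CFC.sqrt A with hSdef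
  have hSS : S * S = A := CFC.sqrt_mul_sqrt_self A hA.posSemidef.nonneg
  have hdetS : S.det * S.det = A.det := by rw [← det_mul, hSS]
  have hdet_pos : 0 < A.det := hA.det_pos
  have hSne : S.det ≠ 0 := fun h => by simp [h] at hdetS; linarith
  have hU : IsUnit S.det := isUnit_iff_ne_zero.mpr hSne
  have hSinv : S * S⁻¹ = 1 := mul_nonsing_inv S hU
  have hSinv' : S⁻¹ * S = 1 := nonsing_inv_mul S hU
  have hSherm : S⁻¹.IsHermitian := ((CFC.sqrt_nonneg A).posSemidef.isHermitian.inv)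
  have hC : (S⁻¹ * (B - A) * S⁻¹).PosSemidef := by
    have := hBA.mul_mul_conjTranspose_same S⁻¹
    rwa [hSherm.eq] at this
  have hB : B = S * (1 + S⁻¹ * (B - A) * S⁻¹) * S := by
    rw [mul_add, add_mul, mul_one, hSS]
    have h2 : S * (S⁻¹ * (B - A) * S⁻¹) * S = B - A := by
      rw [← mul_assoc, ← mul_assoc, hSinv, one_mul, mul_assoc, hSinv', mul_one]
    rw [h2, add_sub_cancel]
  have hBdet : B.det = S.det * (1 + S⁻¹ * (B - A) * S⁻¹).det * S.det := by
    conv_lhs => rw [hB]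
    rw [det_mul, det_mul]
  rw [hBdet, ← hdetS]
  nlinarith [one_le_det_one_add hC, hdet_pos, hdetS]

private lemma esymm_nonneg {s : Multiset ℝ} (h : ∀ x ∈ s, 0 ≤ x) (k : ℕ) : 0 ≤ s.esymm k := by
  rw [Multiset.esymm]
  apply Multiset.sum_nonneg
  intro x hx
  obtain ⟨t, ht, rfl⟩ := Multiset.mem_map.mp hx
  exact Multiset.prod_nonneg fun y hy =>
    h y (Multiset.mem_of_le (Multiset.mem_powersetCard.mp ht).1 hy)

private lemma sum_abs_coeff_eq {M : Matrix (Fin n) (Fin n) ℝ} (hM : M.PosSemidef) :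
    ∑ i ∈ Finset.range (n + 1), |M.charpoly.coeff i| = (1 + M).det := by
  classical
  set μ := hM.isHermitian.eigenvalues with hμ
  set s : Multiset ℝ := Finset.univ.val.map μ with hs
  have hcard : Multiset.card s = n := by simp [hs]
  have hsnn : ∀ x ∈ s, 0 ≤ x := by
    intro x hx
    obtain ⟨i, _, rfl⟩ := Multiset.mem_map.mp hx
    exact hM.eigenvalues_nonneg i
  have hcp : M.charpoly = (s.map fun t => X - Polynomial.C t).prod := by
    rw [charpoly_eq_prod_eigenvalues hM.isHermitian, hs, Multiset.map_map]
    rfl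
  have hcoeff : ∀ k, k ≤ n → |M.charpoly.coeff k| = s.esymm (n - k) := by
    intro k hk
    rw [hcp, Multiset.prod_X_sub_C_coeff s (hcard ▸ hk), hcard, abs_mul, abs_pow, abs_neg,
      abs_one, one_pow, one_mul, abs_of_nonneg (esymm_nonneg hsnn _)]
  have hsum : ∑ i ∈ Finset.range (n + 1), |M.charpoly.coeff i| =
      ∑ j ∈ Finset.range (n + 1), s.esymm j := by
    rw [← Finset.sum_range_reflect (fun j => s.esymm j) (n + 1)]
    apply Finset.sum_congr rfl
    intro k hk
    rw [hcoeff k (Nat.lt_succ_iff.mp (Finset.mem_range.mp hk))]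
    congr 1
  have hvieta := Multiset.prod_X_add_C_eq_sum_esymm s
  have heval := congrArg (Polynomial.eval 1) hvieta
  rw [Polynomial.eval_multiset_prod, Multiset.map_map] at heval
  simp only [Function.comp, Polynomial.eval_add, Polynomial.eval_X, Polynomial.eval_C,
    Polynomial.eval_finset_sum, Polynomial.eval_mul, Polynomial.eval_pow, one_pow, mul_one,
    hcard] at heval
  rw [hsum, ← heval, det_one_add_eq hM.isHermitian]
  rw [hs, Multiset.map_map]
  rfl

private lemma postCov_posSemidef (P : Matrix (Fin n) (Fin n) ℝ) (R : Matrix (Fin m) (Fin m) ℝ)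
    (H : Matrix (Fin m) (Fin n) ℝ) (hP : P.PosDef) (hR : R.PosDef)
    (K : Matrix (Fin n) (Fin m) ℝ) : (postCov P R H K).PosSemidef := by
  have h1 : ((1 - K * H) * P * (1 - K * H)ᵀ).PosSemidef := by
    have := hP.posSemidef.mul_mul_conjTranspose_same (1 - K * H)
    rwa [conjTranspose_eq_transpose_of_trivial] at this
  have h2 : (K * R * Kᵀ).PosSemidef := by
    have := hR.posSemidef.mul_mul_conjTranspose_same K
    rwa [conjTranspose_eq_transpose_of_trivial] at this
  exact h1.add h2

private lemma innovation_posDef (P : Matrix (Fin n) (Fin n) ℝ) (R : Matrix (Fin m) (Fin m) ℝ)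
    (H : Matrix (Fin m) (Fin n) ℝ) (hP : P.PosDef) (hR : R.PosDef) :
    (H * P * Hᵀ + R).PosDef := by
  have h1 : (H * P * Hᵀ).PosSemidef := by
    have := hP.posSemidef.mul_mul_conjTranspose_same H
    rwa [conjTranspose_eq_transpose_of_trivial] at this
  exact Matrix.PosDef.posSemidef_add h1 hR

private lemma decomp_aux (P : Matrix (Fin n) (Fin n) ℝ) (Rm : Matrix (Fin m) (Fin m) ℝ)
    (H : Matrix (Fin m) (Fin n) ℝ) (S : Matrix (Fin m) (Fin m) ℝ)
    (G K : Matrix (Fin n) (Fin m) ℝ)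
    (hPt : Pᵀ = P) (hSexp : H * P * Hᵀ + Rm = S)
    (hGS : G * S = P * Hᵀ) (hSGt : S * Gᵀ = H * P) :
    postCov P Rm H K = postCov P Rm H G + (K - G) * S * (K - G)ᵀ := by
  have hPHt : (H * P)ᵀ = P * Hᵀ := by rw [transpose_mul, hPt]
  have expand : ∀ L : Matrix (Fin n) (Fin m) ℝ,
      postCov P Rm H L = P - L * (H * P) - (H * P)ᵀ * Lᵀ + L * S * Lᵀ := by
    intro L
    rw [postCov, ← hSexp, transpose_sub, transpose_one, transpose_mul, hPHt]
    simp only [Matrix.sub_mul, Matrix.mul_sub, Matrix.add_mul, Matrix.mul_add, Matrix.one_mul,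
      Matrix.mul_one, Matrix.mul_assoc]
    abel
  have expand2 : (K - G) * S * (K - G)ᵀ =
      K * S * Kᵀ - K * (S * Gᵀ) - G * S * Kᵀ + G * (S * Gᵀ) := by
    rw [transpose_sub]
    simp only [Matrix.sub_mul, Matrix.mul_sub, Matrix.mul_assoc]
    abel
  rw [expand K, expand G, expand2, hSGt, hGS, ← hPHt]
  abel

end Aux

theorem abs_det_neg_and_sum_abs_coeff_postCov_kalmanGain_le {n m : ℕ}
    (P : Matrix (Fin n) (Fin n) ℝ)
    (R : Matrix (Fin m) (Fin m) ℝ) (H : Matrix (Fin m) (Fin n) ℝ)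
    (hP : P.PosDef) (hR : R.PosDef) :
    (∀ lam : ℝ, lam < 0 → ∀ K : Matrix (Fin n) (Fin m) ℝ,
      |(lam • (1 : Matrix (Fin n) (Fin n) ℝ) - postCov P R H (kalmanGain P R H)).det| ≤
        |(lam • (1 : Matrix (Fin n) (Fin n) ℝ) - postCov P R H K).det|) ∧
    (∀ K : Matrix (Fin n) (Fin m) ℝ,
      ∑ i ∈ Finset.range (n + 1), |(postCov P R H (kalmanGain P R H)).charpoly.coeff i| ≤
        ∑ i ∈ Finset.range (n + 1), |(postCov P R H K).charpoly.coeff i|) := by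
  have hSpd := innovation_posDef P R H hP hR
  have hSd : IsUnit (H * P * Hᵀ + R).det := hSpd.det_pos.ne'.isUnit
  have hPt : Pᵀ = P := by
    have := hP.isHermitian.eq
    rwa [conjTranspose_eq_transpose_of_trivial] at this
  have hSt : (H * P * Hᵀ + R)ᵀ = H * P * Hᵀ + R := by
    have := hSpd.isHermitian.eq
    rwa [conjTranspose_eq_transpose_of_trivial] at this
  have hGS : kalmanGain P R H * (H * P * Hᵀ + R) = P * Hᵀ := by
    rw [kalmanGain, Matrix.mul_assoc (P * Hᵀ), nonsing_inv_mul _ hSd, Matrix.mul_one]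
  have hSGt : (H * P * Hᵀ + R) * (kalmanGain P R H)ᵀ = H * P := by
    rw [kalmanGain, transpose_mul, transpose_nonsing_inv, hSt, transpose_mul,
      transpose_transpose, hPt, ← Matrix.mul_assoc, mul_nonsing_inv _ hSd, Matrix.one_mul]
  have hdiff : ∀ K : Matrix (Fin n) (Fin m) ℝ,
      (postCov P R H K - postCov P R H (kalmanGain P R H)).PosSemidef := by
    intro K
    have hdec := decomp_aux P R H (H * P * Hᵀ + R) (kalmanGain P R H) K hPt rfl hGS hSGt
    rw [hdec, add_sub_cancel_left]
    have := hSpd.posSemidef.mul_mul_conjTranspose_same (K - kalmanGain P R H)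
    rwa [conjTranspose_eq_transpose_of_trivial] at this
  constructor
  · intro lam hlam K
    have hplam : ∀ K' : Matrix (Fin n) (Fin m) ℝ,
        (postCov P R H K' - lam • (1 : Matrix (Fin n) (Fin n) ℝ)).PosDef := by
      intro K'
      have hneg : postCov P R H K' - lam • (1 : Matrix (Fin n) (Fin n) ℝ) =
          postCov P R H K' + (-lam) • (1 : Matrix (Fin n) (Fin n) ℝ) := by
        rw [sub_eq_add_neg, neg_smul]
      rw [hneg]
      have hd : ((-lam) • (1 : Matrix (Fin n) (Fin n) ℝ)).PosDef := by
        rw [smul_one_eq_diagonal]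
        exact posDef_diagonal_iff.mpr fun i => by linarith
      exact Matrix.PosDef.posSemidef_add (postCov_posSemidef P R H hP hR K') hd
    have habs : ∀ K' : Matrix (Fin n) (Fin m) ℝ,
        |(lam • (1 : Matrix (Fin n) (Fin n) ℝ) - postCov P R H K').det| =
          (postCov P R H K' - lam • (1 : Matrix (Fin n) (Fin n) ℝ)).det := by
      intro K'
      rw [← neg_sub, det_neg, abs_mul, abs_pow, abs_neg, abs_one, one_pow, one_mul,
        abs_of_pos (hplam K').det_pos]
    rw [habs, habs]
    apply det_mono (hplam (kalmanGain P R H))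
    have heq : postCov P R H K - lam • (1 : Matrix (Fin n) (Fin n) ℝ) -
        (postCov P R H (kalmanGain P R H) - lam • (1 : Matrix (Fin n) (Fin n) ℝ)) =
        postCov P R H K - postCov P R H (kalmanGain P R H) := sub_sub_sub_cancel_right _ _ _
    rw [heq]
    exact hdiff K
  · intro K
    rw [sum_abs_coeff_eq (postCov_posSemidef P R H hP hR (kalmanGain P R H)),
      sum_abs_coeff_eq (postCov_posSemidef P R H hP hR K)]
    apply det_mono
    · exact Matrix.PosDef.add_posSemidef Matrix.PosDef.one
        (postCov_posSemidef P R H hP hR (kalmanGain P R H))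
    · rw [add_sub_add_left_eq_sub]
      exact hdiff K
end
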